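/- Let α > 0 be fixed and let x > 0. Then the derivative with respect to x of H₁(α,x) = ∫₀^∞ (t^α / sinh t) · x/(x² + t²) dt satisfies d/dx H₁(α,x) ≤ −(2/(x² + α²)) · S(α,x), where S(α,x) = (α·x^{α−1}/2)·(x² + α²)·R(α,x), R(α,x) = (x/α)·F(α+1,x) − F(α,x), and F(β,x) = ∫₀^∞ t^β / (sinh(xt) · (1 + t²)) dt. -/

import Mathlib

open MeasureTheory Filter Real

/-- `H₁(α,x) = ∫₀^∞ (t^α / sinh t) · x/(x²+t²) dt`. -/
noncomputable def H1fun (α x : ℝ) : ℝ :=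
  ∫ t in Set.Ioi (0:ℝ), t ^ α / Real.sinh t * (x / (x ^ 2 + t ^ 2))

/-- `F(β,x) = ∫₀^∞ t^β / (sinh(xt)·(1+t²)) dt`. -/
noncomputable def Ffun (β x : ℝ) : ℝ :=
  ∫ t in Set.Ioi (0:ℝ), t ^ β / (Real.sinh (x * t) * (1 + t ^ 2))

/-- `R(α,x) = (x/α)·F(α+1,x) − F(α,x)`. -/
noncomputable def Rfun (α x : ℝ) : ℝ :=
  (x / α) * Ffun (α + 1) x - Ffun α x

/-- `S(α,x) = (α·x^{α−1}/2)·(x²+α²)·R(α,x)`. -/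
noncomputable def Sfun (α x : ℝ) : ℝ :=
  (α * x ^ (α - 1) / 2) * (x ^ 2 + α ^ 2) * Rfun α x

/-- key integrability lemma -/
lemma intF {c p : ℝ} (hc : 0 < c) (hp : 0 < p) :
    IntegrableOn (fun t : ℝ => t ^ p / (Real.sinh (c * t) * (1 + t ^ 2)))
      (Set.Ioi (0:ℝ)) := by
  have hmeas : Measurable (fun t : ℝ => t ^ p / (Real.sinh (c * t) * (1 + t ^ 2))) := by
    fun_prop
  rw [← Set.Ioc_union_Ioi_eq_Ioi (zero_le_one : (0:ℝ) ≤ 1)]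
  apply MeasureTheory.IntegrableOn.union
  · -- on Ioc 0 1
    have hdom : IntegrableOn (fun t : ℝ => c⁻¹ * t ^ (p - 1)) (Set.Ioc (0:ℝ) 1) := by
      have := (intervalIntegral.intervalIntegrable_rpow' (a := 0) (b := 1)
        (r := p - 1) (by linarith)).const_mul c⁻¹
      rwa [intervalIntegrable_iff_integrableOn_Ioc_of_le zero_le_one] at this
    refine Integrable.mono' hdom hmeas.aestronglyMeasurable ?_
    rw [ae_restrict_iff' measurableSet_Ioc]
    refine Filter.Eventually.of_forall (fun t ht => ?_)
    obtain ⟨ht0, ht1⟩ := ht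
    have hst : c * t < Real.sinh (c * t) := Real.self_lt_sinh_iff.2 (by positivity)
    have hs0 : 0 < Real.sinh (c * t) := lt_trans (by positivity) hst
    have hden : c * t ≤ Real.sinh (c * t) * (1 + t ^ 2) := by nlinarith [sq_nonneg t]
    rw [Real.norm_eq_abs, abs_of_nonneg (by positivity)]
    have h1 : t ^ p / (Real.sinh (c * t) * (1 + t ^ 2)) ≤ t ^ p / (c * t) :=
      div_le_div_of_nonneg_left (Real.rpow_nonneg ht0.le _) (by positivity) hden
    refine h1.trans (le_of_eq ?_)
    rw [Real.rpow_sub_one ht0.ne']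
    field_simp
  · -- on Ioi 1
    refine integrable_of_isBigO_exp_neg (half_pos hc) ?_ ?_
    · -- continuity on Ici 1
      apply ContinuousOn.div
      · intro t ht
        exact (Real.continuousAt_rpow_const t p
          (Or.inl (lt_of_lt_of_le one_pos ht).ne')).continuousWithinAt
      · exact ((Real.continuous_sinh.comp (continuous_const.mul continuous_id)).mul
          (continuous_const.add (continuous_pow 2))).continuousOn
      · intro t ht
        have ht0 : (0:ℝ) < t := lt_of_lt_of_le one_pos ht
        have : 0 < Real.sinh (c * t) := Real.sinh_pos_iff.2 (by positivity)
        positivity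
    · rw [Asymptotics.isBigO_iff]
      refine ⟨4, ?_⟩
      have h1 : ∀ᶠ t : ℝ in atTop, t ^ p ≤ Real.exp (c / 2 * t) := by
        have := (isLittleO_rpow_exp_pos_mul_atTop p (half_pos hc)).bound one_pos
        filter_upwards [this, eventually_ge_atTop (0:ℝ)] with t ht ht0
        rw [Real.norm_eq_abs, Real.norm_eq_abs, abs_of_nonneg (Real.rpow_nonneg ht0 _),
          abs_of_nonneg (Real.exp_pos _).le, one_mul] at ht
        exact ht
      filter_upwards [h1, eventually_ge_atTop (1/c), eventually_ge_atTop (0:ℝ)]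
        with t ht htc ht0
      have hct : 1 ≤ c * t := by
        rw [div_le_iff₀ hc] at htc; linarith [htc]
      set A := Real.exp (c / 2 * t) with hA
      have hA2 : Real.exp (c * t) = A * A := by
        rw [hA, ← Real.exp_add]; ring_nf
      have hA1 : 1 ≤ A := by
        rw [hA, ← Real.exp_zero]
        exact Real.exp_le_exp.2 (by positivity)
      have hsinh : A * A / 4 ≤ Real.sinh (c * t) := by
        rw [Real.sinh_eq, hA2]
        have he1 : Real.exp (-(c * t)) ≤ 1 := Real.exp_le_one_iff.2 (by linarith)
        have h2 : (2:ℝ) ≤ A * A := by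
          rw [← hA2]
          have := Real.add_one_le_exp (c * t)
          linarith
        nlinarith
      have hs0 : 0 < Real.sinh (c * t) := Real.sinh_pos_iff.2 (by linarith)
      rw [Real.norm_eq_abs, Real.norm_eq_abs, abs_of_nonneg (by positivity),
        abs_of_nonneg (Real.exp_pos _).le]
      have hexp : Real.exp (-(c / 2) * t) = A⁻¹ := by
        rw [hA, ← Real.exp_neg]; ring_nf
      rw [hexp]
      have hA0 : 0 < A := Real.exp_pos _
      have step1 : t ^ p / (Real.sinh (c * t) * (1 + t ^ 2)) ≤ A / (A * A / 4) := by
        apply div_le_div₀ (by positivity) ht (by positivity)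
        nlinarith [sq_nonneg t, hs0]
      refine step1.trans (le_of_eq ?_)
      field_simp

/-- pointwise bound for the derivative integrand -/
lemma bound_aux {c y t α : ℝ} (hc : 0 < c) (hcy : c < y) (ht : 0 < t) :
    t ^ (α + 1) * Real.cosh (y * t) / (Real.sinh (y * t) ^ 2 * (1 + t ^ 2)) ≤
      t ^ (α + 1) / (Real.sinh (c * t) * (1 + t ^ 2)) +
        c⁻¹ * (t ^ α / (Real.sinh (c * t) * (1 + t ^ 2))) := by
  have hy : 0 < y := hc.trans hcy
  have hsc : 0 < Real.sinh (c * t) := Real.sinh_pos_iff.2 (by positivity)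
  have hsu : 0 < Real.sinh (y * t) := Real.sinh_pos_iff.2 (by positivity)
  have hmono : Real.sinh (c * t) ≤ Real.sinh (y * t) :=
    Real.sinh_le_sinh.2 (by nlinarith)
  have hself : c * t < Real.sinh (y * t) :=
    lt_of_lt_of_le (by nlinarith) (le_of_lt (Real.self_lt_sinh_iff.2 (by positivity)))
  have hcosh : Real.cosh (y * t) ≤ Real.sinh (y * t) + 1 := by
    have h := Real.cosh_sq (y * t)
    have : Real.cosh (y * t) - Real.sinh (y * t) = Real.exp (-(y * t)) := by
      rw [Real.cosh_eq, Real.sinh_eq]; ring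
    have he : Real.exp (-(y * t)) ≤ 1 := Real.exp_le_one_iff.2 (neg_nonpos.2 (by positivity))
    linarith
  set su := Real.sinh (y * t)
  set sc := Real.sinh (c * t)
  set cu := Real.cosh (y * t)
  have hT : (0:ℝ) < t ^ α := Real.rpow_pos_of_pos ht α
  have hTa : t ^ (α + 1) = t ^ α * t := Real.rpow_add_one ht.ne' α
  rw [hTa]
  set T := t ^ α
  have key : cu / su ^ 2 ≤ 1 / sc + 1 / (c * t * sc) := by
    have h1 : cu / su ^ 2 ≤ (su + 1) / su ^ 2 :=
      div_le_div_of_nonneg_right hcosh (by positivity) |>.trans_eq rfl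
    have h2 : (su + 1) / su ^ 2 = 1 / su + 1 / su ^ 2 := by
      field_simp
    have h3 : 1 / su ≤ 1 / sc := one_div_le_one_div_of_le hsc hmono
    have h4 : 1 / su ^ 2 ≤ 1 / (c * t * sc) := by
      apply one_div_le_one_div_of_le (by positivity)
      nlinarith
    linarith [h1, h3, h4, h2.le, h2.ge]
  have hsu' : su ≠ 0 := hsu.ne'
  have h2t : (1:ℝ) + t ^ 2 ≠ 0 := by positivity
  have hfact : T * t * cu / (su ^ 2 * (1 + t ^ 2)) =
      (T * t / (1 + t ^ 2)) * (cu / su ^ 2) := by field_simp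
  rw [hfact]
  have hstep := mul_le_mul_of_nonneg_left key (by positivity : (0:ℝ) ≤ T * t / (1 + t ^ 2))
  refine hstep.trans (le_of_eq ?_)
  field_simp

/-- change of variables: H1 = x^α F -/
lemma H1_eq_aux {α y : ℝ} (hy : 0 < y) : H1fun α y = y ^ α * Ffun α y := by
  have h := MeasureTheory.integral_comp_mul_left_Ioi
    (fun t => t ^ α / Real.sinh t * (y / (y ^ 2 + t ^ 2))) 0 hy
  rw [mul_zero] at h
  have heq : Set.EqOn
      (fun s : ℝ => (y * s) ^ α / Real.sinh (y * s) * (y / (y ^ 2 + (y * s) ^ 2)))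
      (fun s : ℝ => y ^ (α - 1) * (s ^ α / (Real.sinh (y * s) * (1 + s ^ 2))))
      (Set.Ioi 0) := by
    intro s hs
    have hs0 : (0:ℝ) < s := hs
    have hsinh : Real.sinh (y * s) ≠ 0 := (Real.sinh_pos_iff.2 (by positivity)).ne'
    have h2 : (1:ℝ) + s ^ 2 ≠ 0 := by positivity
    simp only
    rw [Real.mul_rpow hy.le hs0.le, Real.rpow_sub_one hy.ne']
    field_simp
  rw [MeasureTheory.setIntegral_congr_fun measurableSet_Ioi heq,
    MeasureTheory.integral_const_mul] at h
  have hH : (∫ t in Set.Ioi (0:ℝ), t ^ α / Real.sinh t * (y / (y ^ 2 + t ^ 2)))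
      = H1fun α y := rfl
  rw [hH, smul_eq_mul] at h
  have hF : (∫ s in Set.Ioi (0:ℝ), s ^ α / (Real.sinh (y * s) * (1 + s ^ 2)))
      = Ffun α y := rfl
  rw [hF] at h
  rw [Real.rpow_sub_one hy.ne'] at h
  have hy' : y ≠ 0 := hy.ne'
  field_simp at h
  linarith

/-- derivative of F in x, with the inequality -/
lemma F_deriv {α x : ℝ} (hα : 0 < α) (hx : 0 < x) :
    ∃ d : ℝ, HasDerivAt (fun y : ℝ => Ffun α y) d x ∧ d ≤ -(Ffun (α + 1) x) := by
  set c : ℝ := x / 2 with hc_def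
  have hc : 0 < c := by positivity
  set G : ℝ → ℝ → ℝ := fun y t => t ^ α / (Real.sinh (y * t) * (1 + t ^ 2)) with hG
  set G' : ℝ → ℝ → ℝ := fun y t =>
    -(t ^ (α + 1) * Real.cosh (y * t) / (Real.sinh (y * t) ^ 2 * (1 + t ^ 2))) with hG'
  set B : ℝ → ℝ := fun t => t ^ (α + 1) / (Real.sinh (c * t) * (1 + t ^ 2)) +
    c⁻¹ * (t ^ α / (Real.sinh (c * t) * (1 + t ^ 2))) with hB
  have hmain := hasDerivAt_integral_of_dominated_loc_of_deriv_le
    (μ := volume.restrict (Set.Ioi (0:ℝ))) (F := G) (F' := G') (x₀ := x)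
    (bound := B) (s := Metric.ball x c) (Metric.ball_mem_nhds x hc)
    (Filter.Eventually.of_forall fun y =>
      (by fun_prop : Measurable fun t : ℝ =>
        t ^ α / (Real.sinh (y * t) * (1 + t ^ 2))).aestronglyMeasurable)
    (intF hx hα)
    ((by fun_prop : Measurable fun t : ℝ =>
      -(t ^ (α + 1) * Real.cosh (x * t) /
        (Real.sinh (x * t) ^ 2 * (1 + t ^ 2)))).aestronglyMeasurable)
    ?_ ?_ ?_
  · obtain ⟨hint', hderiv⟩ := hmain
    refine ⟨_, hderiv, ?_⟩
    have hFeq : -(Ffun (α + 1) x) =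
        ∫ t in Set.Ioi (0:ℝ), -(t ^ (α + 1) / (Real.sinh (x * t) * (1 + t ^ 2))) := by
      rw [Ffun, ← MeasureTheory.integral_neg]
    rw [hFeq]
    apply MeasureTheory.setIntegral_mono_on hint'
      ((intF hx (by linarith : (0:ℝ) < α + 1)).neg) measurableSet_Ioi
    intro t ht
    have ht0 : (0:ℝ) < t := ht
    have hs0 : 0 < Real.sinh (x * t) := Real.sinh_pos_iff.2 (by positivity)
    have hch : Real.sinh (x * t) < Real.cosh (x * t) := Real.sinh_lt_cosh _
    have hT : (0:ℝ) < t ^ (α + 1) := Real.rpow_pos_of_pos ht0 _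
    simp only [hG', Pi.neg_apply]
    rw [neg_le_neg_iff, div_le_div_iff₀ (by positivity) (by positivity)]
    nlinarith [mul_pos (mul_pos hT hs0) (by positivity : (0:ℝ) < 1 + t ^ 2)]
  · -- bound
    rw [ae_restrict_iff' measurableSet_Ioi]
    refine Filter.Eventually.of_forall fun t ht => fun y hy => ?_
    have ht0 : (0:ℝ) < t := ht
    have hcy : c < y := by
      have := abs_lt.1 (by simpa [Real.dist_eq] using Metric.mem_ball.1 hy)
      simp only [hc_def] at *
      linarith [this.1]
    have hy0 : 0 < y := hc.trans hcy
    have hsu : 0 < Real.sinh (y * t) := Real.sinh_pos_iff.2 (by positivity)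
    simp only [hG', hB]
    rw [Real.norm_eq_abs, abs_neg, abs_of_nonneg (div_nonneg
      (mul_nonneg (Real.rpow_nonneg ht0.le _) (Real.cosh_pos _).le) (by positivity))]
    exact bound_aux hc hcy ht0
  · exact ((intF hc (by linarith : (0:ℝ) < α + 1)).add
      ((intF hc hα).const_mul c⁻¹))
  · -- differentiability
    rw [ae_restrict_iff' measurableSet_Ioi]
    refine Filter.Eventually.of_forall fun t ht => fun y hy => ?_
    have ht0 : (0:ℝ) < t := ht
    have hcy : c < y := by
      have := abs_lt.1 (by simpa [Real.dist_eq] using Metric.mem_ball.1 hy)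
      simp only [hc_def] at *
      linarith [this.1]
    have hy0 : 0 < y := hc.trans hcy
    have hsu : 0 < Real.sinh (y * t) := Real.sinh_pos_iff.2 (by positivity)
    have h2t : (0:ℝ) < 1 + t ^ 2 := by positivity
    have h1 : HasDerivAt (fun z : ℝ => Real.sinh (z * t)) (Real.cosh (y * t) * t) y := by
      exact (Real.hasDerivAt_sinh (y * t)).comp y (hasDerivAt_mul_const t)
    have h2 : HasDerivAt (fun z : ℝ => Real.sinh (z * t) * (1 + t ^ 2))
        (Real.cosh (y * t) * t * (1 + t ^ 2)) y := h1.mul_const _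
    have hne : Real.sinh (y * t) * (1 + t ^ 2) ≠ 0 := by positivity
    have h3 := h2.inv hne
    have h4 := h3.const_mul (t ^ α)
    have h5 : HasDerivAt (fun z : ℝ => G z t)
        (t ^ α * (-(Real.cosh (y * t) * t * (1 + t ^ 2)) /
          (Real.sinh (y * t) * (1 + t ^ 2)) ^ 2)) y := by
      simp only [hG, div_eq_mul_inv]
      exact h4
    refine h5.congr_deriv ?_
    show _ = G' y t
    simp only [hG']
    rw [Real.rpow_add_one ht0.ne']
    field_simp

theorem stmt_14 (α x : ℝ) (hα : 0 < α) (hx : 0 < x) :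
    ∃ d : ℝ, HasDerivAt (fun y : ℝ => H1fun α y) d x ∧
      d ≤ -(2 / (x ^ 2 + α ^ 2)) * Sfun α x := by
  obtain ⟨d', hd', hle⟩ := F_deriv hα hx
  have hpow : HasDerivAt (fun y : ℝ => y ^ α) (α * x ^ (α - 1)) x :=
    Real.hasDerivAt_rpow_const (Or.inl hx.ne')
  have hprod := hpow.mul hd'
  have hev : (fun y : ℝ => H1fun α y) =ᶠ[nhds x] (fun y : ℝ => y ^ α * Ffun α y) := by
    filter_upwards [isOpen_Ioi.mem_nhds (Set.mem_Ioi.2 hx)] with y hy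
    exact H1_eq_aux hy
  have hH : HasDerivAt (fun y : ℝ => H1fun α y)
      (α * x ^ (α - 1) * Ffun α x + x ^ α * d') x :=
    hprod.congr_of_eventuallyEq hev
  refine ⟨_, hH, ?_⟩
  have hxa : (0:ℝ) < x ^ α := Real.rpow_pos_of_pos hx _
  have hle2 : α * x ^ (α - 1) * Ffun α x + x ^ α * d' ≤
      α * x ^ (α - 1) * Ffun α x - x ^ α * Ffun (α + 1) x := by
    nlinarith [mul_le_mul_of_nonneg_left hle hxa.le]
  refine hle2.trans (le_of_eq ?_)
  rw [Sfun, Rfun]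
  have hx1 : x ^ α = x ^ (α - 1) * x := by
    rw [← Real.rpow_add_one hx.ne' (α - 1)]; norm_num
  rw [hx1]
  have hd : x ^ 2 + α ^ 2 ≠ 0 := by positivity
  field_simp
  ring
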